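/- Let M be a set system on [n] that is a strong Δ-matroid, i.e. M satisfies both the symmetric exchange property and the strong exchange property for Δ-matroids. If I, J ∈ M are such that |I Δ J| is odd, then there exists i ∈ I Δ J such that I Δ {i} ∈ M and J Δ {i} ∈ M. -/
import Mathlib


open scoped symmDiff

/-- The symmetric exchange property for Δ-matroids. -/
def SymmetricExchange {n : ℕ} (M : Finset (Finset (Fin n))) : Prop :=
  ∀ A ∈ M, ∀ B ∈ M, ∀ a ∈ A ∆ B, ∃ b ∈ A ∆ B, A ∆ {a, b} ∈ M

/-- The strong exchange property for Δ-matroids. -/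
def StrongExchange {n : ℕ} (M : Finset (Finset (Fin n))) : Prop :=
  ∀ A ∈ M, ∀ B ∈ M, A ≠ B →
    ∃ a ∈ A ∆ B, ∃ b ∈ A ∆ B, A ∆ {a, b} ∈ M ∧ B ∆ {a, b} ∈ M

namespace DeltaAux

lemma symmDiff_of_subset {α : Type*} [DecidableEq α] {S T : Finset α} (h : T ⊆ S) :
    S ∆ T = S \ T := by
  ext x
  simp only [Finset.mem_symmDiff, Finset.mem_sdiff]
  constructor
  · rintro (⟨hx, hnx⟩ | ⟨hx, hnx⟩)
    · exact ⟨hx, hnx⟩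
    · exact absurd (h hx) hnx
  · rintro ⟨hx, hnx⟩
    exact Or.inl ⟨hx, hnx⟩

lemma symmDiff_singleton_not_mem {α : Type*} [DecidableEq α] {T : Finset α} {i : α}
    (h : i ∉ T) : T ∆ {i} = insert i T := by
  ext x
  simp only [Finset.mem_symmDiff, Finset.mem_singleton, Finset.mem_insert]
  constructor
  · rintro (⟨hx, _⟩ | ⟨rfl, _⟩)
    · exact Or.inr hx
    · exact Or.inl rfl
  · rintro (rfl | hx)
    · exact Or.inr ⟨rfl, h⟩
    · exact Or.inl ⟨hx, fun e => h (e ▸ hx)⟩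

lemma symmDiff_singleton_mem {α : Type*} [DecidableEq α] {T : Finset α} {c : α}
    (h : c ∈ T) : T ∆ {c} = T.erase c := by
  ext x
  simp only [Finset.mem_symmDiff, Finset.mem_singleton, Finset.mem_erase]
  constructor
  · rintro (⟨hx, hnx⟩ | ⟨rfl, hx⟩)
    · exact ⟨hnx, hx⟩
    · exact absurd h hx
  · rintro ⟨hne, hx⟩
    exact Or.inl ⟨hx, hne⟩

/-- The distance-3 case. -/
lemma three {n : ℕ} {M : Finset (Finset (Fin n))} (h2 : StrongExchange M)
    {A B : Finset (Fin n)} (hA : A ∈ M) (hB : B ∈ M)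
    (h3 : (A ∆ B).card = 3) :
    ∃ c ∈ A ∆ B, A ∆ {c} ∈ M ∧ B ∆ {c} ∈ M := by
  have hne : A ≠ B := by
    intro h
    rw [h, symmDiff_self] at h3
    simp at h3
  obtain ⟨p, hp, q, hq, hApq, hBpq⟩ := h2 A hA B hB hne
  by_cases hpq : p = q
  · subst hpq
    have hpp : ({p, p} : Finset (Fin n)) = {p} := by simp
    rw [hpp] at hApq hBpq
    exact ⟨p, hp, hApq, hBpq⟩
  · have hsub : ({p, q} : Finset (Fin n)) ⊆ A ∆ B := by
      intro x hx
      rcases Finset.mem_insert.mp hx with rfl | hx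
      · exact hp
      · exact Finset.mem_singleton.mp hx ▸ hq
    have hcard2 : ({p, q} : Finset (Fin n)).card = 2 := Finset.card_pair hpq
    have h1 : ((A ∆ B) \ {p, q}).card = 1 := by
      rw [Finset.card_sdiff_of_subset hsub, h3, hcard2]
    obtain ⟨r, hr⟩ := Finset.card_eq_one.mp h1
    have hrS : r ∈ A ∆ B := by
      have : r ∈ (A ∆ B) \ ({p, q} : Finset (Fin n)) := by
        rw [hr]; exact Finset.mem_singleton_self r
      exact (Finset.mem_sdiff.mp this).1
    have key : (A ∆ B) ∆ {p, q} = {r} := by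
      rw [symmDiff_of_subset hsub, hr]
    have e1 : B ∆ {p, q} = A ∆ {r} := by
      calc B ∆ {p, q} = A ∆ (A ∆ B) ∆ {p, q} := by rw [symmDiff_symmDiff_cancel_left]
        _ = A ∆ ((A ∆ B) ∆ {p, q}) := symmDiff_assoc _ _ _
        _ = A ∆ {r} := by rw [key]
    have e2 : A ∆ {p, q} = B ∆ {r} := by
      calc A ∆ {p, q} = B ∆ (B ∆ A) ∆ {p, q} := by rw [symmDiff_symmDiff_cancel_left]
        _ = B ∆ ((B ∆ A) ∆ {p, q}) := symmDiff_assoc _ _ _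
        _ = B ∆ ((A ∆ B) ∆ {p, q}) := by rw [symmDiff_comm B A]
        _ = B ∆ {r} := by rw [key]
    exact ⟨r, hrS, e1 ▸ hBpq, e2 ▸ hApq⟩

/-- One improvement round in the case `5 ≤ |A ∆ B|`. -/
lemma round {n : ℕ} {M : Finset (Finset (Fin n))} (h2 : StrongExchange M)
    {A B : Finset (Fin n)} (hA : A ∈ M) (hB : B ∈ M)
    (hd : 5 ≤ (A ∆ B).card) (hodd : Odd (A ∆ B).card)
    (IH : ∀ A' ∈ M, ∀ B' ∈ M, (A' ∆ B').card < (A ∆ B).card → Odd (A' ∆ B').card →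
      ∃ i ∈ A' ∆ B', A' ∆ {i} ∈ M ∧ B' ∆ {i} ∈ M)
    {T : Finset (Fin n)} (hTsub : T ⊆ A ∆ B) (hT2 : T.card = 2) (hAT : A ∆ T ∈ M) :
    (∃ i ∈ A ∆ B, A ∆ {i} ∈ M ∧ B ∆ {i} ∈ M) ∨
    (∃ T' : Finset (Fin n), T' ⊆ A ∆ B ∧ T'.card = 2 ∧ A ∆ T' ∈ M ∧
      (T'.filter (fun x => B ∆ {x} ∉ M)).card < (T.filter (fun x => B ∆ {x} ∉ M)).card) := by
  have hD : (A ∆ T) ∆ B = (A ∆ B) \ T := by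
    rw [symmDiff_right_comm, symmDiff_of_subset hTsub]
  have hDcard : ((A ∆ T) ∆ B).card = (A ∆ B).card - 2 := by
    rw [hD, Finset.card_sdiff_of_subset hTsub, hT2]
  have hodd' : Odd ((A ∆ T) ∆ B).card := by
    rw [Nat.odd_iff] at hodd ⊢
    omega
  have hlt : ((A ∆ T) ∆ B).card < (A ∆ B).card := by omega
  obtain ⟨i, hi, hATi, hBi⟩ := IH (A ∆ T) hAT B hB hlt hodd'
  rw [hD, Finset.mem_sdiff] at hi
  obtain ⟨hiS, hiT⟩ := hi
  set U : Finset (Fin n) := insert i T with hUdef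
  have hUcard : U.card = 3 := by
    rw [hUdef, Finset.card_insert_of_notMem hiT, hT2]
  have hUsub : U ⊆ A ∆ B := by
    intro x hx
    rcases Finset.mem_insert.mp hx with rfl | hx
    · exact hiS
    · exact hTsub hx
  have hAU : A ∆ U ∈ M := by
    have : A ∆ U = (A ∆ T) ∆ {i} := by
      rw [symmDiff_assoc, symmDiff_singleton_not_mem hiT]
    rw [this]
    exact hATi
  have hcancel : A ∆ (A ∆ U) = U := symmDiff_symmDiff_cancel_left A U
  have h3 : (A ∆ (A ∆ U)).card = 3 := by rw [hcancel, hUcard]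
  obtain ⟨c, hc, hAc, hAUc⟩ := three h2 hA hAU h3
  rw [hcancel] at hc
  by_cases hBc : B ∆ {c} ∈ M
  · exact Or.inl ⟨c, hUsub hc, hAc, hBc⟩
  · have hci : c ≠ i := fun e => hBc (e ▸ hBi)
    have hcT : c ∈ T := by
      rcases Finset.mem_insert.mp hc with rfl | hx
      · exact absurd rfl hci
      · exact hx
    refine Or.inr ⟨U.erase c, ?_, ?_, ?_, ?_⟩
    · exact (Finset.erase_subset c U).trans hUsub
    · rw [Finset.card_erase_of_mem hc, hUcard]
    · have : A ∆ (U.erase c) = (A ∆ U) ∆ {c} := by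
        rw [symmDiff_assoc, symmDiff_singleton_mem hc]
      rw [this]
      exact hAUc
    · have hsub2 : (U.erase c).filter (fun x => B ∆ {x} ∉ M) ⊆
          (T.filter (fun x => B ∆ {x} ∉ M)).erase c := by
        intro x hx
        rw [Finset.mem_filter] at hx
        obtain ⟨hxU, hxbad⟩ := hx
        rw [Finset.mem_erase] at hxU ⊢
        refine ⟨hxU.1, Finset.mem_filter.mpr ⟨?_, hxbad⟩⟩
        rcases Finset.mem_insert.mp hxU.2 with rfl | hx
        · exact absurd hBi hxbad
        · exact hx
      have hcmem : c ∈ T.filter (fun x => B ∆ {x} ∉ M) :=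
        Finset.mem_filter.mpr ⟨hcT, hBc⟩
      have h1 : ((U.erase c).filter (fun x => B ∆ {x} ∉ M)).card ≤
          ((T.filter (fun x => B ∆ {x} ∉ M)).erase c).card := Finset.card_le_card hsub2
      have h2' : ((T.filter (fun x => B ∆ {x} ∉ M)).erase c).card =
          (T.filter (fun x => B ∆ {x} ∉ M)).card - 1 :=
        Finset.card_erase_of_mem hcmem
      have h3' : 1 ≤ (T.filter (fun x => B ∆ {x} ∉ M)).card :=
        Finset.card_pos.mpr ⟨c, hcmem⟩
      omega

lemma main_aux {n : ℕ} {M : Finset (Finset (Fin n))} (h2 : StrongExchange M) :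
    ∀ d : ℕ, ∀ A ∈ M, ∀ B ∈ M, (A ∆ B).card = d → Odd d →
      ∃ i ∈ A ∆ B, A ∆ {i} ∈ M ∧ B ∆ {i} ∈ M := by
  intro d
  induction d using Nat.strong_induction_on with
  | _ d IHd =>
  intro A hA B hB hcard hodd
  have hcases : d = 1 ∨ d = 3 ∨ 5 ≤ d := by
    rcases hodd with ⟨m, rfl⟩
    omega
  rcases hcases with rfl | rfl | hd5
  · -- d = 1
    obtain ⟨x, hx⟩ := Finset.card_eq_one.mp hcard
    refine ⟨x, by rw [hx]; exact Finset.mem_singleton_self x, ?_, ?_⟩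
    · have : A ∆ {x} = B := by
        rw [← hx, symmDiff_symmDiff_cancel_left]
      rw [this]; exact hB
    · have : B ∆ {x} = A := by
        rw [← hx, symmDiff_comm A B, symmDiff_symmDiff_cancel_left]
      rw [this]; exact hA
  · exact three h2 hA hB hcard
  · -- 5 ≤ d
    have IH : ∀ A' ∈ M, ∀ B' ∈ M, (A' ∆ B').card < (A ∆ B).card → Odd (A' ∆ B').card →
        ∃ i ∈ A' ∆ B', A' ∆ {i} ∈ M ∧ B' ∆ {i} ∈ M := by
      intro A' hA' B' hB' hlt hodd'
      rw [hcard] at hlt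
      exact IHd _ hlt A' hA' B' hB' rfl hodd'
    have hd : 5 ≤ (A ∆ B).card := hcard ▸ hd5
    have hoddc : Odd (A ∆ B).card := hcard ▸ hodd
    have hne : A ≠ B := by
      intro h
      rw [h, symmDiff_self] at hcard
      simp at hcard
      omega
    obtain ⟨a, ha, b, hb, hAab, hBab⟩ := h2 A hA B hB hne
    by_cases hab : a = b
    · subst hab
      have hpp : ({a, a} : Finset (Fin n)) = {a} := by simp
      rw [hpp] at hAab hBab
      exact ⟨a, ha, hAab, hBab⟩
    · -- chain: strong induction on number of bad elements of T
      have chain : ∀ m : ℕ, ∀ T : Finset (Fin n), T ⊆ A ∆ B → T.card = 2 → A ∆ T ∈ M →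
          (T.filter (fun x => B ∆ {x} ∉ M)).card ≤ m →
          ∃ i ∈ A ∆ B, A ∆ {i} ∈ M ∧ B ∆ {i} ∈ M := by
        intro m
        induction m with
        | zero =>
          intro T hTsub hT2 hAT hbad
          rcases round h2 hA hB hd hoddc IH hTsub hT2 hAT with h | ⟨T', _, _, _, hlt⟩
          · exact h
          · omega
        | succ m ih =>
          intro T hTsub hT2 hAT hbad
          rcases round h2 hA hB hd hoddc IH hTsub hT2 hAT with h | ⟨T', hT'sub, hT'2, hAT', hlt⟩
          · exact h
          · exact ih T' hT'sub hT'2 hAT' (by omega)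
      have hTsub : ({a, b} : Finset (Fin n)) ⊆ A ∆ B := by
        intro x hx
        rcases Finset.mem_insert.mp hx with rfl | hx
        · exact ha
        · exact Finset.mem_singleton.mp hx ▸ hb
      exact chain 2 {a, b} hTsub (Finset.card_pair hab) hAab
        (Finset.card_filter_le _ _ |>.trans (by rw [Finset.card_pair hab]))

end DeltaAux

/-- In a strong Δ-matroid, if `|I Δ J|` is odd then some single element
exchange works simultaneously for `I` and `J`. -/
theorem strong_delta_matroid_odd_antipode_exchange
    {n : ℕ} (M : Finset (Finset (Fin n)))
    (h1 : SymmetricExchange M) (h2 : StrongExchange M)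
    {I J : Finset (Fin n)} (hI : I ∈ M) (hJ : J ∈ M)
    (hodd : Odd (I ∆ J).card) :
    ∃ i ∈ I ∆ J, I ∆ {i} ∈ M ∧ J ∆ {i} ∈ M := by
  exact DeltaAux.main_aux h2 (I ∆ J).card I hI J hJ rfl hodd
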